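/- The generating functions A(x) = Σ a(n)x^n and B(x) = Σ b(n)x^n of even and odd Motzkin path counts satisfy A(x) = 1 + x·A(x) + 2x²·A(x)·B(x) and B(x) = x·B(x) + x²·A(x)² + x²·B(x)². -/

import Mathlib

inductive MStep where
  | U : MStep
  | D : MStep
  | H : MStep
deriving DecidableEq

/-- A word in {U,D,H} is a Motzkin path if #U = #D and no prefix has more D's than U's. -/
def IsMotzkin (w : List MStep) : Prop :=
  w.count MStep.U = w.count MStep.D ∧
  ∀ p : List MStep, p <+: w → p.count MStep.D ≤ p.count MStep.U

/-- Number of Motzkin paths of length n (the n-th Motzkin number). -/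
noncomputable def motzkinNum (n : ℕ) : ℕ :=
  Nat.card {w : List MStep // w.length = n ∧ IsMotzkin w}

/-- Number of Motzkin paths of length n with an even number of U steps. -/
noncomputable def evenMotzkin (n : ℕ) : ℕ :=
  Nat.card {w : List MStep // w.length = n ∧ IsMotzkin w ∧ Even (w.count MStep.U)}

/-- Number of Motzkin paths of length n with an odd number of U steps. -/
noncomputable def oddMotzkin (n : ℕ) : ℕ :=
  Nat.card {w : List MStep // w.length = n ∧ IsMotzkin w ∧ Odd (w.count MStep.U)}

/-- The shadow of the n-th Motzkin number: s(n) = a(n) - b(n). -/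
noncomputable def shadow (n : ℕ) : ℤ :=
  (evenMotzkin n : ℤ) - (oddMotzkin n : ℤ)

/-! ### Auxiliary development -/

open MStep

lemma motzkin_nil : IsMotzkin [] :=
  ⟨rfl, fun p hp => by simp [List.prefix_nil.mp hp]⟩

instance : Fintype MStep := ⟨{MStep.U, MStep.D, MStep.H}, by intro x; cases x <;> simp⟩

instance : DecidablePred IsMotzkin := fun w =>
  decidable_of_iff (w.count U = w.count D ∧ ∀ p ∈ w.inits, p.count MStep.D ≤ p.count MStep.U)
    (by simp [IsMotzkin, List.mem_inits])

lemma prefix_append_cases {q w1 w2 : List MStep} (h : q <+: w1 ++ w2) :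
    q <+: w1 ∨ ∃ r, q = w1 ++ r ∧ r <+: w2 := by
  rcases le_or_gt q.length w1.length with hle | hlt
  · exact Or.inl (List.prefix_of_prefix_length_le h (List.prefix_append _ _) hle)
  · right
    have hw1 : w1 <+: q := List.prefix_of_prefix_length_le (List.prefix_append _ _) h hlt.le
    obtain ⟨r, rfl⟩ := hw1
    exact ⟨r, rfl, (List.prefix_append_right_inj w1).mp h⟩

def firstRet : List MStep → ℕ → Option (List MStep × List MStep)
  | [], _ => none
  | (D :: t), 0 => some ([], t)
  | (D :: t), (k+1) => (firstRet t k).map (fun p => (D :: p.1, p.2))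
  | (U :: t), k => (firstRet t (k+1)).map (fun p => (U :: p.1, p.2))
  | (H :: t), k => (firstRet t k).map (fun p => (H :: p.1, p.2))

lemma firstRet_spec : ∀ (t : List MStep) (k : ℕ) (w1 w2 : List MStep),
    firstRet t k = some (w1, w2) →
    t = w1 ++ D :: w2 ∧ w1.count D = w1.count U + k ∧
      ∀ p, p <+: w1 → p.count D ≤ p.count U + k := by
  intro t
  induction t with
  | nil => intro k w1 w2 h; simp [firstRet] at h
  | cons a t ih =>
    intro k w1 w2 h
    cases a with
    | D =>
      cases k with
      | zero =>
        simp [firstRet] at h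
        obtain ⟨rfl, rfl⟩ := h
        refine ⟨rfl, by simp, fun p hp => ?_⟩
        simp [List.prefix_nil.mp hp]
      | succ k =>
        rw [firstRet] at h
        obtain ⟨⟨p1, p2⟩, hfr, hpe⟩ := Option.map_eq_some_iff.mp h
        injection hpe with he1 he2
        subst he1; subst he2
        obtain ⟨rfl, hc, hpre⟩ := ih k p1 p2 hfr
        refine ⟨by simp, by simp [List.count_cons]; omega, fun p hp => ?_⟩
        rcases List.prefix_cons_iff.mp hp with rfl | ⟨q, rfl, hq⟩
        · simp
        · have := hpre q hq
          simp [List.count_cons]; omega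
    | U =>
      rw [firstRet] at h
      obtain ⟨⟨p1, p2⟩, hfr, hpe⟩ := Option.map_eq_some_iff.mp h
      injection hpe with he1 he2
      subst he1; subst he2
      obtain ⟨rfl, hc, hpre⟩ := ih (k+1) p1 p2 hfr
      refine ⟨by simp, by simp [List.count_cons]; omega, fun p hp => ?_⟩
      rcases List.prefix_cons_iff.mp hp with rfl | ⟨q, rfl, hq⟩
      · simp
      · have := hpre q hq
        simp [List.count_cons]; omega
    | H =>
      rw [firstRet] at h
      obtain ⟨⟨p1, p2⟩, hfr, hpe⟩ := Option.map_eq_some_iff.mp h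
      injection hpe with he1 he2
      subst he1; subst he2
      obtain ⟨rfl, hc, hpre⟩ := ih k p1 p2 hfr
      refine ⟨by simp, by simp [List.count_cons]; omega, fun p hp => ?_⟩
      rcases List.prefix_cons_iff.mp hp with rfl | ⟨q, rfl, hq⟩
      · simp
      · have := hpre q hq
        simp [List.count_cons]; omega

lemma firstRet_isSome : ∀ (t : List MStep) (k : ℕ),
    t.count U + k < t.count D → (firstRet t k).isSome := by
  intro t
  induction t with
  | nil => intro k h; simp at h
  | cons a t ih =>
    intro k h
    cases a with
    | D =>
      cases k with
      | zero => simp [firstRet]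
      | succ k =>
        simp [List.count_cons] at h
        have := ih k (by omega)
        simpa [firstRet, Option.isSome_map] using this
    | U =>
      simp [List.count_cons] at h
      have := ih (k+1) (by omega)
      simpa [firstRet, Option.isSome_map] using this
    | H =>
      simp [List.count_cons] at h
      have := ih k (by omega)
      simpa [firstRet, Option.isSome_map] using this

lemma motzkin_U_decomp {t : List MStep} (h : IsMotzkin (U :: t)) :
    ∃ w1 w2, t = w1 ++ D :: w2 ∧ IsMotzkin w1 ∧ IsMotzkin w2 := by
  obtain ⟨hc, hpre⟩ := h
  simp [List.count_cons] at hc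
  have hsome : (firstRet t 0).isSome := firstRet_isSome t 0 (by omega)
  obtain ⟨⟨w1, w2⟩, hfr⟩ := Option.isSome_iff_exists.mp hsome
  obtain ⟨rfl, hcnt, hp1⟩ := firstRet_spec t 0 w1 w2 hfr
  simp at hcnt
  have hM1 : IsMotzkin w1 := ⟨hcnt.symm, by simpa using hp1⟩
  refine ⟨w1, w2, rfl, hM1, ?_, ?_⟩
  · simp [List.count_append, List.count_cons] at hc ⊢
    omega
  · intro p hp
    have := hpre (U :: w1 ++ D :: p) ?_
    · simp [List.count_cons, List.count_append] at this
      omega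
    · rw [List.prefix_cons_iff]
      right
      exact ⟨w1 ++ D :: p, rfl, by
        refine (List.prefix_append_right_inj w1).mpr ?_
        simpa using hp⟩

lemma glue_unique {w1 w2 w1' w2' : List MStep} (h1 : IsMotzkin w1) (h1' : IsMotzkin w1')
    (heq : w1 ++ D :: w2 = w1' ++ D :: w2') : w1 = w1' ∧ w2 = w2' := by
  have key : ∀ (a b a' b' : List MStep), IsMotzkin a → IsMotzkin a' →
      a ++ D :: b = a' ++ D :: b' → a.length ≤ a'.length → a = a' := by
    intro a b a' b' ha ha' he hlen
    have hpa : a <+: a' := by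
      apply List.prefix_of_prefix_length_le (l₃ := a' ++ D :: b')
      · rw [← he]; exact List.prefix_append _ _
      · exact List.prefix_append _ _
      · exact hlen
    obtain ⟨r, rfl⟩ := hpa
    cases r with
    | nil => simp
    | cons x r =>
      exfalso
      rw [List.append_assoc] at he
      have h2 := List.append_cancel_left he
      have hx : x = D := by cases h2; rfl
      subst hx
      have hd := ha'.2 (a ++ [D]) ⟨r, by simp⟩
      have hca := ha.1
      simp [List.count_append] at hd
      omega
  rcases le_or_gt w1.length w1'.length with hle | hlt
  · have := key w1 w2 w1' w2' h1 h1' heq hle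
    subst this
    exact ⟨rfl, (List.cons.inj (List.append_cancel_left heq)).2⟩
  · have := (key w1' w2' w1 w2 h1' h1 heq.symm hlt.le).symm
    subst this
    exact ⟨rfl, (List.cons.inj (List.append_cancel_left heq)).2⟩

lemma motzkin_cons_iff {a : MStep} {t : List MStep} :
    IsMotzkin (a :: t) ↔
      (a = H ∧ IsMotzkin t) ∨
      (a = U ∧ ∃ w1 w2, t = w1 ++ D :: w2 ∧ IsMotzkin w1 ∧ IsMotzkin w2) := by
  constructor
  · intro h
    cases a with
    | D =>
      exfalso
      have := h.2 [D] ⟨t, rfl⟩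
      simp at this
    | H =>
      left
      refine ⟨rfl, ?_⟩
      obtain ⟨hc, hp⟩ := h
      refine ⟨by simpa [List.count_cons] using hc, fun p hq => ?_⟩
      simpa [List.count_cons] using hp (H :: p) (by simpa using hq)
    | U => exact Or.inr ⟨rfl, motzkin_U_decomp h⟩
  · rintro (⟨rfl, h⟩ | ⟨rfl, w1, w2, rfl, h1, h2⟩)
    · obtain ⟨hc, hp⟩ := h
      refine ⟨by simpa [List.count_cons] using hc, fun p hq => ?_⟩
      rcases List.prefix_cons_iff.mp hq with rfl | ⟨q, rfl, hqt⟩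
      · simp
      · simpa [List.count_cons] using hp q hqt
    · obtain ⟨c1, p1⟩ := h1
      obtain ⟨c2, p2⟩ := h2
      refine ⟨by simp [List.count_cons, List.count_append]; omega, fun p hp => ?_⟩
      rcases List.prefix_cons_iff.mp hp with rfl | ⟨q, rfl, hq⟩
      · simp
      rcases prefix_append_cases hq with hq1 | ⟨r, rfl, hr⟩
      · have := p1 q hq1
        simp [List.count_cons]; omega
      · rcases List.prefix_cons_iff.mp hr with rfl | ⟨s, rfl, hs⟩
        · simp [List.count_cons, List.count_append]; omega
        · have := p2 s hs
          simp [List.count_cons, List.count_append]; omega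

/-! ### Finset counting layer -/

def Lset : ℕ → Finset (List MStep)
  | 0 => {[]}
  | n+1 => ((Finset.univ : Finset MStep) ×ˢ Lset n).image (fun p => p.1 :: p.2)

lemma mem_Lset {w : List MStep} : ∀ {n : ℕ}, w ∈ Lset n ↔ w.length = n := by
  induction w with
  | nil => intro n; cases n <;> simp [Lset]
  | cons a t ih =>
    intro n
    cases n with
    | zero => simp [Lset]
    | succ n => simp [Lset, ih]

def MzF (n : ℕ) : Finset (List MStep) := (Lset n).filter IsMotzkin

lemma mem_MzF {n : ℕ} {w : List MStep} : w ∈ MzF n ↔ w.length = n ∧ IsMotzkin w := by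
  simp [MzF, mem_Lset]

def cntF (n : ℕ) (Q : ℕ → Prop) [DecidablePred Q] : Finset (List MStep) :=
  (Lset n).filter (fun w => IsMotzkin w ∧ Q (w.count U))

lemma mem_cntF {n : ℕ} {Q : ℕ → Prop} [DecidablePred Q] {w : List MStep} :
    w ∈ cntF n Q ↔ w.length = n ∧ IsMotzkin w ∧ Q (w.count U) := by
  simp [cntF, mem_Lset]

lemma card_cntF_eq_natCard (n : ℕ) (Q : ℕ → Prop) [DecidablePred Q] :
    Nat.card {w : List MStep // w.length = n ∧ IsMotzkin w ∧ Q (w.count U)} = (cntF n Q).card := by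
  have h1 : {w : List MStep | w.length = n ∧ IsMotzkin w ∧ Q (w.count U)} = ↑(cntF n Q) := by
    ext w; simp [mem_cntF]
  calc Nat.card {w : List MStep // w.length = n ∧ IsMotzkin w ∧ Q (w.count U)}
      = Nat.card {w : List MStep | w.length = n ∧ IsMotzkin w ∧ Q (w.count U)} := rfl
    _ = {w : List MStep | w.length = n ∧ IsMotzkin w ∧ Q (w.count U)}.ncard :=
        Nat.card_coe_set_eq _
    _ = (cntF n Q).card := by rw [h1, Set.ncard_coe_finset]

def glueSet (ij : ℕ × ℕ) (Q : ℕ → Prop) [DecidablePred Q] : Finset (List MStep × List MStep) :=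
  ((MzF ij.1) ×ˢ (MzF ij.2)).filter (fun p => Q (1 + p.1.count U + p.2.count U))

lemma count_U_glue (w1 w2 : List MStep) :
    (MStep.U :: (w1 ++ MStep.D :: w2)).count U = 1 + w1.count U + w2.count U := by
  simp [List.count_cons, List.count_append]; omega

lemma cntF_succ_succ (n : ℕ) (Q : ℕ → Prop) [DecidablePred Q] :
    cntF (n+2) Q = ((cntF (n+1) Q).image (fun t => H :: t)) ∪
      (Finset.HasAntidiagonal.antidiagonal n).biUnion (fun ij =>
        (glueSet ij Q).image (fun p => U :: p.1 ++ D :: p.2)) := by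
  ext w
  simp only [Finset.mem_union, Finset.mem_image, Finset.mem_biUnion, mem_cntF,
    Finset.HasAntidiagonal.mem_antidiagonal, glueSet, Finset.mem_filter, Finset.mem_product, mem_MzF]
  constructor
  · rintro ⟨hlen, hM, hQ⟩
    cases w with
    | nil => simp at hlen
    | cons a t =>
      rcases motzkin_cons_iff.mp hM with ⟨rfl, hMt⟩ | ⟨rfl, w1, w2, rfl, h1, h2⟩
      · left
        refine ⟨t, ⟨by simpa using hlen, hMt, ?_⟩, rfl⟩
        simpa [List.count_cons] using hQ
      · right
        refine ⟨(w1.length, w2.length), ?_, (w1, w2), ⟨⟨⟨rfl, h1⟩, rfl, h2⟩, ?_⟩, by simp⟩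
        · simp at hlen; omega
        · show Q (1 + w1.count U + w2.count U)
          rwa [count_U_glue] at hQ
  · rintro (⟨t, ⟨hlen, hMt, hQ⟩, rfl⟩ | ⟨⟨i, j⟩, hij, ⟨w1, w2⟩, ⟨⟨⟨hl1, h1⟩, hl2, h2⟩, hQ⟩, rfl⟩)
    · refine ⟨by simpa using hlen, ?_, by simpa [List.count_cons] using hQ⟩
      exact motzkin_cons_iff.mpr (Or.inl ⟨rfl, hMt⟩)
    · simp only at hl1 hl2 hQ
      refine ⟨by simp; omega, ?_, ?_⟩
      · exact motzkin_cons_iff.mpr (Or.inr ⟨rfl, w1, w2, by simp, h1, h2⟩)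
      · show Q ((U :: (w1 ++ D :: w2)).count U)
        rwa [count_U_glue]

lemma card_cntF_succ_succ (n : ℕ) (Q : ℕ → Prop) [DecidablePred Q] :
    (cntF (n+2) Q).card = (cntF (n+1) Q).card +
      ∑ ij ∈ Finset.HasAntidiagonal.antidiagonal n, (glueSet ij Q).card := by
  rw [cntF_succ_succ]
  rw [Finset.card_union_of_disjoint, Finset.card_image_of_injective _ (fun a b h => by
    injection h), Finset.card_biUnion]
  · congr 1
    refine Finset.sum_congr rfl (fun ij hij => ?_)
    apply Finset.card_image_of_injOn
    rintro ⟨a1, a2⟩ ha ⟨b1, b2⟩ hb hab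
    simp only [glueSet, Finset.coe_filter, Finset.mem_product, mem_MzF, Set.mem_setOf_eq,
      Finset.mem_coe] at ha hb
    simp only [List.cons_append] at hab
    injection hab with _ h2
    obtain ⟨rfl, rfl⟩ := glue_unique ha.1.1.2 hb.1.1.2 h2
    rfl
  · rintro ⟨i, j⟩ hij ⟨i', j'⟩ hij' hne
    rw [Function.onFun, Finset.disjoint_left]
    rintro w hw1 hw2
    simp only [Finset.mem_image, glueSet, Finset.mem_filter, Finset.mem_product, mem_MzF]
      at hw1 hw2
    obtain ⟨⟨a1, a2⟩, ⟨⟨⟨hal1, ha1⟩, hal2, ha2⟩, -⟩, rfl⟩ := hw1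
    obtain ⟨⟨b1, b2⟩, ⟨⟨⟨hbl1, hb1⟩, hbl2, hb2⟩, -⟩, heq⟩ := hw2
    simp only [List.cons_append, List.cons.injEq] at heq
    obtain ⟨rfl, rfl⟩ := glue_unique hb1 ha1 heq.2
    exact hne (by simp only at hal1 hal2 hbl1 hbl2; rw [← hal1, ← hal2, ← hbl1, ← hbl2])
  · rw [Finset.disjoint_left]
    rintro w hw1 hw2
    simp only [Finset.mem_image, Finset.mem_biUnion] at hw1 hw2
    obtain ⟨t, -, rfl⟩ := hw1
    obtain ⟨ij, -, ⟨a1, a2⟩, -, heq⟩ := hw2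
    simp at heq

lemma cntF_zero (Q : ℕ → Prop) [DecidablePred Q] :
    cntF 0 Q = if Q 0 then {([] : List MStep)} else ∅ := by
  ext w
  rw [mem_cntF]
  by_cases h : Q 0 <;> simp only [h, if_true, if_false, Finset.mem_singleton, Finset.notMem_empty]
  · constructor
    · rintro ⟨hl, -, -⟩; exact List.length_eq_zero_iff.mp hl
    · rintro rfl; exact ⟨rfl, motzkin_nil, h⟩
  · simp only [iff_false]
    rintro ⟨hl, -, hQ⟩
    rw [List.length_eq_zero_iff.mp hl] at hQ
    exact h hQ

lemma cntF_one (Q : ℕ → Prop) [DecidablePred Q] :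
    cntF 1 Q = (cntF 0 Q).image (fun t => H :: t) := by
  ext w
  simp only [mem_cntF, Finset.mem_image]
  constructor
  · rintro ⟨hlen, hM, hQ⟩
    cases w with
    | nil => simp at hlen
    | cons a t =>
      rcases motzkin_cons_iff.mp hM with ⟨rfl, hMt⟩ | ⟨rfl, w1, w2, het, -⟩
      · exact ⟨t, ⟨by simpa using hlen, hMt, by simpa [List.count_cons] using hQ⟩, rfl⟩
      · exfalso
        have : t.length = 0 := by simpa using hlen
        rw [het] at this; simp at this
  · rintro ⟨t, ⟨hlen, hMt, hQ⟩, rfl⟩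
    exact ⟨by simpa using hlen, motzkin_cons_iff.mpr (Or.inl ⟨rfl, hMt⟩),
      by simpa [List.count_cons] using hQ⟩

lemma card_cntF_one (Q : ℕ → Prop) [DecidablePred Q] :
    (cntF 1 Q).card = (cntF 0 Q).card := by
  rw [cntF_one]
  exact Finset.card_image_of_injective _ (fun a b h => by injection h)

lemma glueSet_even (ij : ℕ × ℕ) :
    glueSet ij Even = (cntF ij.1 Even ×ˢ cntF ij.2 Odd) ∪ (cntF ij.1 Odd ×ˢ cntF ij.2 Even) := by
  ext ⟨w1, w2⟩
  simp only [glueSet, Finset.mem_filter, Finset.mem_product, Finset.mem_union, mem_MzF, mem_cntF]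
  have hpar : Even (1 + w1.count U + w2.count U) ↔
      ((Even (w1.count U) ∧ Odd (w2.count U)) ∨ (Odd (w1.count U) ∧ Even (w2.count U))) := by
    simp only [Nat.even_iff, Nat.odd_iff]
    omega
  rw [hpar]
  tauto

lemma glueSet_odd (ij : ℕ × ℕ) :
    glueSet ij Odd = (cntF ij.1 Even ×ˢ cntF ij.2 Even) ∪ (cntF ij.1 Odd ×ˢ cntF ij.2 Odd) := by
  ext ⟨w1, w2⟩
  simp only [glueSet, Finset.mem_filter, Finset.mem_product, Finset.mem_union, mem_MzF, mem_cntF]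
  have hpar : Odd (1 + w1.count U + w2.count U) ↔
      ((Even (w1.count U) ∧ Even (w2.count U)) ∨ (Odd (w1.count U) ∧ Odd (w2.count U))) := by
    simp only [Nat.even_iff, Nat.odd_iff]
    omega
  rw [hpar]
  tauto

lemma card_glueSet_even (ij : ℕ × ℕ) :
    (glueSet ij Even).card =
      (cntF ij.1 Even).card * (cntF ij.2 Odd).card
        + (cntF ij.1 Odd).card * (cntF ij.2 Even).card := by
  rw [glueSet_even, Finset.card_union_of_disjoint, Finset.card_product, Finset.card_product]
  rw [Finset.disjoint_left]
  rintro ⟨w1, w2⟩ h1 h2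
  simp only [Finset.mem_product, mem_cntF] at h1 h2
  exact (Nat.not_odd_iff_even.mpr h1.1.2.2) h2.1.2.2

lemma card_glueSet_odd (ij : ℕ × ℕ) :
    (glueSet ij Odd).card =
      (cntF ij.1 Even).card * (cntF ij.2 Even).card
        + (cntF ij.1 Odd).card * (cntF ij.2 Odd).card := by
  rw [glueSet_odd, Finset.card_union_of_disjoint, Finset.card_product, Finset.card_product]
  rw [Finset.disjoint_left]
  rintro ⟨w1, w2⟩ h1 h2
  simp only [Finset.mem_product, mem_cntF] at h1 h2
  exact (Nat.not_odd_iff_even.mpr h1.1.2.2) h2.1.2.2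

/-! ### Numeric recurrences -/

lemma evenMotzkin_eq_card (n : ℕ) : evenMotzkin n = (cntF n Even).card :=
  card_cntF_eq_natCard n Even

lemma oddMotzkin_eq_card (n : ℕ) : oddMotzkin n = (cntF n Odd).card :=
  card_cntF_eq_natCard n Odd

lemma e0 : evenMotzkin 0 = 1 := by
  rw [evenMotzkin_eq_card, cntF_zero]
  simp

lemma o0 : oddMotzkin 0 = 0 := by
  rw [oddMotzkin_eq_card, cntF_zero]
  simp [Nat.odd_iff]

lemma e1 : evenMotzkin 1 = evenMotzkin 0 := by
  rw [evenMotzkin_eq_card, evenMotzkin_eq_card, card_cntF_one]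

lemma o1 : oddMotzkin 1 = oddMotzkin 0 := by
  rw [oddMotzkin_eq_card, oddMotzkin_eq_card, card_cntF_one]

lemma eS (n : ℕ) : evenMotzkin (n+2) = evenMotzkin (n+1) +
    ∑ ij ∈ Finset.HasAntidiagonal.antidiagonal n,
      (evenMotzkin ij.1 * oddMotzkin ij.2 + oddMotzkin ij.1 * evenMotzkin ij.2) := by
  simp only [evenMotzkin_eq_card, oddMotzkin_eq_card]
  rw [card_cntF_succ_succ]
  congr 1
  exact Finset.sum_congr rfl (fun ij _ => card_glueSet_even ij)

lemma oS (n : ℕ) : oddMotzkin (n+2) = oddMotzkin (n+1) +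
    ∑ ij ∈ Finset.HasAntidiagonal.antidiagonal n,
      (evenMotzkin ij.1 * evenMotzkin ij.2 + oddMotzkin ij.1 * oddMotzkin ij.2) := by
  simp only [evenMotzkin_eq_card, oddMotzkin_eq_card]
  rw [card_cntF_succ_succ]
  congr 1
  exact Finset.sum_congr rfl (fun ij _ => card_glueSet_odd ij)

open PowerSeries in
theorem stmt_14 :
    (PowerSeries.mk fun n => (evenMotzkin n : ℤ)) =
      1 + X * (PowerSeries.mk fun n => (evenMotzkin n : ℤ))
        + 2 * X ^ 2 * (PowerSeries.mk fun n => (evenMotzkin n : ℤ))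
            * (PowerSeries.mk fun n => (oddMotzkin n : ℤ)) ∧
    (PowerSeries.mk fun n => (oddMotzkin n : ℤ)) =
      X * (PowerSeries.mk fun n => (oddMotzkin n : ℤ))
        + X ^ 2 * (PowerSeries.mk fun n => (evenMotzkin n : ℤ)) ^ 2
        + X ^ 2 * (PowerSeries.mk fun n => (oddMotzkin n : ℤ)) ^ 2 := by
  set A := (PowerSeries.mk fun n => (evenMotzkin n : ℤ)) with hA
  set B := (PowerSeries.mk fun n => (oddMotzkin n : ℤ)) with hB
  have h2 : 2 * X ^ 2 * A * B = X ^ 2 * (A * B + A * B) := by ring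
  constructor
  · ext n
    rw [h2]
    match n with
    | 0 =>
      simp [hA, hB, coeff_zero_eq_constantCoeff, map_add, map_mul, e0]
    | 1 =>
      rw [map_add, map_add, coeff_succ_X_mul]
      have hx : (coeff 1) (X ^ 2 * (A * B + A * B)) = 0 := by
        rw [coeff_mul]
        apply Finset.sum_eq_zero
        intro ij hij
        rw [Finset.HasAntidiagonal.mem_antidiagonal] at hij
        rw [coeff_X_pow]
        have : ij.1 ≠ 2 := by omega
        simp [this]
      rw [hx]
      simp [hA, e1, coeff_one]
    | (n+2) =>
      rw [map_add, map_add]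
      rw [show n + 2 = (n+1) + 1 by ring, coeff_succ_X_mul]
      rw [show n + 1 + 1 = n + 2 by ring]
      rw [PowerSeries.coeff_X_pow_mul (A * B + A * B) 2 n]
      rw [map_add, coeff_mul]
      simp only [hA, hB, coeff_mk, coeff_one]
      rw [eS n]
      push_cast [Finset.sum_add_distrib]
      have hswap : (∑ x ∈ Finset.HasAntidiagonal.antidiagonal n, (oddMotzkin x.1 : ℤ) * (evenMotzkin x.2 : ℤ)) =
          ∑ x ∈ Finset.HasAntidiagonal.antidiagonal n, (evenMotzkin x.1 : ℤ) * (oddMotzkin x.2 : ℤ) := by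
        rw [← Finset.Nat.sum_antidiagonal_swap
          (f := fun p => (oddMotzkin p.1 : ℤ) * (evenMotzkin p.2 : ℤ))]
        simp [mul_comm]
      rw [hswap]
      ring
  · ext n
    rw [show X * B + X ^ 2 * A ^ 2 + X ^ 2 * B ^ 2 = X * B + X ^ 2 * (A * A + B * B) from by ring]
    match n with
    | 0 =>
      simp [hA, hB, coeff_zero_eq_constantCoeff, map_add, map_mul, o0]
    | 1 =>
      rw [map_add, coeff_succ_X_mul]
      have hx : (coeff 1) ((X : ℤ⟦X⟧) ^ 2 * (A * A + B * B)) = 0 := by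
        rw [coeff_mul]
        apply Finset.sum_eq_zero
        intro ij hij
        rw [Finset.HasAntidiagonal.mem_antidiagonal] at hij
        rw [coeff_X_pow]
        have : ij.1 ≠ 2 := by omega
        simp [this]
      rw [hx]
      simp [hA, hB, o1]
    | (n+2) =>
      rw [map_add]
      rw [show n + 2 = (n+1) + 1 by ring, coeff_succ_X_mul]
      rw [show n + 1 + 1 = n + 2 by ring]
      rw [PowerSeries.coeff_X_pow_mul (A * A + B * B) 2 n]
      rw [map_add, coeff_mul, coeff_mul]
      simp only [hA, hB, coeff_mk]
      rw [oS n]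
      push_cast [Finset.sum_add_distrib]
      ring
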